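/- arXiv:1903.09854 — 4 statements merged into one kernel-verified Lean document; each statement's English description precedes it below -/
import Mathlib

section
/- Let n ≥ 1 be an integer and let G be a nontrivial subgroup of the symmetric group S_n whose natural action on {1,…,n} is not primitive. Then n > P(G); that is, G possesses a maximal subgroup M with index [G : M] < n. -/
open MulAction Pointwise

/-- A group action is primitive if it is transitive and every block is trivial. -/
def IsPrimitiveAction (G X : Type*) [Group G] [MulAction G X] : Prop :=
  MulAction.IsPretransitive G X ∧ ∀ B : Set X, MulAction.IsBlock G B → MulAction.IsTrivialBlock B

/-- From a proper subgroup of index < n, get a coatom of index < n. -/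
lemma aux_coatom {G : Type*} [Group G] [Finite G] (H : Subgroup G) (hH : H ≠ ⊤)
    {n : ℕ} (hidx : H.index < n) : ∃ M : Subgroup G, IsCoatom M ∧ M.index < n := by
  obtain ⟨M, hM, hle⟩ := (eq_top_or_exists_le_coatom H).resolve_left hH
  refine ⟨M, hM, lt_of_le_of_lt ?_ hidx⟩
  exact Nat.le_of_dvd (Nat.pos_of_ne_zero (Subgroup.index_ne_zero_of_finite))
    (Subgroup.index_dvd_of_le hle)

/-- Let `n ≥ 1` and let `G` be a nontrivial subgroup of the symmetric group `S_n` whose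
natural action on `{1,…,n}` is not primitive. Then `G` possesses a maximal subgroup `M`
with index `[G : M] < n`. -/
theorem stmt_1 (n : ℕ) (hn : 1 ≤ n) (G : Subgroup (Equiv.Perm (Fin n))) (hG : G ≠ ⊥)
    (hprim : ¬ IsPrimitiveAction ↥G (Fin n)) :
    ∃ M : Subgroup ↥G, IsCoatom M ∧ M.index < n := by
  by_cases htrans : IsPretransitive ↥G (Fin n)
  · -- transitive case: there is a nontrivial block
    obtain ⟨B, hB, hBnt⟩ : ∃ B : Set (Fin n), IsBlock ↥G B ∧ ¬ IsTrivialBlock B := by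
      by_contra h
      push_neg at h
      exact hprim ⟨htrans, h⟩
    rw [IsTrivialBlock, not_or] at hBnt
    obtain ⟨hBs, hBu⟩ := hBnt
    rw [Set.not_subsingleton_iff] at hBs
    obtain ⟨a, ha, b, hb, hab⟩ := hBs
    have hsle := hB.stabilizer_le ha
    have hrel : (stabilizer ↥G a).relIndex (stabilizer ↥G B) = B.ncard :=
      (hB.ncard_block_eq_relIndex ha).symm
    have heq : (stabilizer ↥G a).relIndex (stabilizer ↥G B) * (stabilizer ↥G B).index = n := by
      rw [Subgroup.relIndex_mul_index hsle, index_stabilizer_of_transitive,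
        Nat.card_eq_fintype_card, Fintype.card_fin]
    have h2 : 2 ≤ B.ncard := (Set.one_lt_ncard (Set.toFinite B)).mpr ⟨a, ha, b, hb, hab⟩
    have hpos : 0 < (stabilizer ↥G B).index :=
      Nat.pos_of_ne_zero Subgroup.index_ne_zero_of_finite
    have hidx : (stabilizer ↥G B).index < n := by
      calc (stabilizer ↥G B).index < 2 * (stabilizer ↥G B).index := by omega
        _ ≤ B.ncard * (stabilizer ↥G B).index := Nat.mul_le_mul_right _ h2
        _ = n := by rw [← hrel]; exact heq
    refine aux_coatom _ ?_ hidx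
    intro htop
    obtain ⟨c, hc⟩ : ∃ c, c ∉ B := by
      by_contra h
      push_neg at h
      exact hBu (Set.eq_univ_of_forall h)
    obtain ⟨k, hk⟩ := htrans.exists_smul_eq a c
    have hkmem : k ∈ stabilizer ↥G B := htop ▸ Subgroup.mem_top k
    rw [mem_stabilizer_iff] at hkmem
    exact hc (hkmem ▸ hk ▸ Set.smul_mem_smul_set ha)
  · -- intransitive case: stabilizer of a moved point
    obtain ⟨g, hgG, hg1⟩ : ∃ g ∈ G, g ≠ 1 := by
      by_contra h
      push_neg at h
      exact hG ((Subgroup.eq_bot_iff_forall G).mpr h)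
    obtain ⟨a, hga⟩ : ∃ a, g a ≠ a := by
      by_contra h
      push_neg at h
      exact hg1 (Equiv.ext h)
    have hne : stabilizer ↥G a ≠ ⊤ := by
      intro htop
      have : (⟨g, hgG⟩ : ↥G) ∈ stabilizer ↥G a := htop ▸ Subgroup.mem_top _
      rw [mem_stabilizer_iff] at this
      exact hga this
    have horb : orbit ↥G a ≠ Set.univ := by
      intro h
      apply htrans
      constructor
      intro x y
      have hx : x ∈ orbit ↥G a := h ▸ Set.mem_univ x
      have hy : y ∈ orbit ↥G a := h ▸ Set.mem_univ y
      obtain ⟨u, rfl⟩ := hx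
      obtain ⟨v, rfl⟩ := hy
      exact ⟨v * u⁻¹, by rw [mul_smul, inv_smul_smul]⟩
    have hidx : (stabilizer ↥G a).index < n := by
      rw [index_stabilizer]
      calc (orbit ↥G a).ncard < (Set.univ : Set (Fin n)).ncard :=
            Set.ncard_lt_ncard ((Set.ssubset_univ_iff).mpr horb) Set.finite_univ
        _ = n := by rw [Set.ncard_univ, Nat.card_eq_fintype_card, Fintype.card_fin]
    exact aux_coatom _ hne hidx
end

section
/- Let n and ℓ be integers with n ≥ 324 and ℓ ≥ 8, and set L(n) = (1/2)·log₂ n + 1. Assume that ℓ ≤ (log₂ n + 2)·log₂ n and that (2(n+3)/ℓ − 6)^ℓ < n^{L(n)}. Then ℓ ≤ 0.7·log₂ n + 1.4. -/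
open Real

private lemma two_rpow_le_of_pow_le {r c : ℝ} {q : ℕ} (hq : q ≠ 0) (hc : 0 ≤ c)
    (h : (2:ℝ) ^ (r * q) ≤ c ^ q) : (2:ℝ) ^ r ≤ c := by
  apply le_of_pow_le_pow_left₀ hq hc
  rwa [← Real.rpow_natCast ((2:ℝ) ^ r) q, ← Real.rpow_mul (by norm_num)]

private lemma le_two_rpow_of_pow_le {r c : ℝ} {q : ℕ} (hq : q ≠ 0) (hc : 0 ≤ c)
    (h : c ^ q ≤ (2:ℝ) ^ (r * q)) : c ≤ (2:ℝ) ^ r := by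
  apply le_of_pow_le_pow_left₀ hq (Real.rpow_nonneg (by norm_num) r)
  rwa [← Real.rpow_natCast ((2:ℝ) ^ r) q, ← Real.rpow_mul (by norm_num)]

set_option maxHeartbeats 1600000 in
/-- Let `n ≥ 324` and `ℓ ≥ 8`, and set `L(n) = (1/2)·log₂ n + 1`.  Assume
`ℓ ≤ (log₂ n + 2)·log₂ n` and `(2(n+3)/ℓ − 6)^ℓ < n^{L(n)}`.
Then `ℓ ≤ 0.7·log₂ n + 1.4`. -/
theorem stmt_8 (n ℓ : ℕ) (hn : 324 ≤ n) (hl : 8 ≤ ℓ)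
    (h1 : (ℓ : ℝ) ≤ (Real.logb 2 n + 2) * Real.logb 2 n)
    (h2 : (2 * ((n : ℝ) + 3) / ℓ - 6) ^ (ℓ : ℝ) < (n : ℝ) ^ ((1 / 2) * Real.logb 2 n + 1)) :
    (ℓ : ℝ) ≤ 0.7 * Real.logb 2 n + 1.4 := by
  by_contra hcon
  push_neg at hcon
  set L := Real.logb 2 (n:ℝ) with hLdef
  clear_value L
  have h324 : (324:ℝ) ≤ (n:ℝ) := by exact_mod_cast hn
  have hn0 : (0:ℝ) < (n:ℝ) := by linarith
  have hnL : (n:ℝ) = 2 ^ L := by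
    rw [hLdef]; exact (Real.rpow_logb (by norm_num) (by norm_num) hn0).symm
  have h2324 : (2:ℝ) ^ (8.33:ℝ) ≤ 324 := by
    apply two_rpow_le_of_pow_le (q := 100) (by norm_num) (by norm_num)
    rw [show (8.33 * ((100:ℕ):ℝ)) = ((833:ℕ):ℝ) by norm_num, Real.rpow_natCast]
    rw [show (2:ℝ)^833 = ((2:ℝ)^7)^119 by rw [← pow_mul]]; norm_num
  have hL833 : (8.33:ℝ) ≤ L := by
    have hle : (2:ℝ) ^ (8.33:ℝ) ≤ (2:ℝ) ^ L := by rw [← hnL]; linarith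
    exact (Real.rpow_le_rpow_left_iff (by norm_num)).mp hle
  obtain ⟨m, hm, hLm⟩ : ∃ m : ℝ, 0 ≤ m ∧ L = m + 8.33 := ⟨L - 8.33, by linarith, by ring⟩
  have hlog2 : (0.6931:ℝ) ≤ Real.log 2 := by
    have := Real.log_two_gt_d9; linarith
  -- Right endpoint inequality: (√2 + 6) · (L+2)·L ≤ 2(n+3)
  have h321 : (321:ℝ) ≤ (2:ℝ) ^ (8.33:ℝ) := by
    apply le_two_rpow_of_pow_le (q := 100) (by norm_num) (by norm_num)
    rw [show (8.33 * ((100:ℕ):ℝ)) = ((833:ℕ):ℝ) by norm_num, Real.rpow_natCast]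
    rw [show (2:ℝ)^833 = ((2:ℝ)^7)^119 by rw [← pow_mul]]; norm_num
  have hsplitn : (n:ℝ) = (2:ℝ) ^ (8.33:ℝ) * (2:ℝ) ^ m := by
    rw [hnL, ← Real.rpow_add (by norm_num)]
    congr 1
    rw [hLm]; ring
  have hexpm : (1 + 0.231*m)^3 ≤ (2:ℝ) ^ m := by
    have hcube : (2:ℝ) ^ m = Real.exp (Real.log 2 * m / 3) ^ (3:ℕ) := by
      rw [Real.rpow_def_of_pos (by norm_num), ← Real.exp_nat_mul]
      congr 1; push_cast; ring
    rw [hcube]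
    apply pow_le_pow_left₀ (by nlinarith)
    have h1' := Real.add_one_le_exp (Real.log 2 * m / 3)
    have h2' : 0.6931 * m ≤ Real.log 2 * m := mul_le_mul_of_nonneg_right hlog2 hm
    nlinarith [h1', h2']
  have hncube : 321 * (1 + 0.231*m)^3 ≤ (n:ℝ) := by
    rw [hsplitn]
    have h0 : (0:ℝ) ≤ (1 + 0.231*m)^3 := by positivity
    nlinarith
  have hsqrt2 : (2:ℝ) ^ ((1:ℝ)/2) ≤ 1.41422 := by
    apply two_rpow_le_of_pow_le (q := 2) (by norm_num) (by norm_num)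
    rw [show ((1:ℝ)/2 * ((2:ℕ):ℝ)) = ((1:ℕ):ℝ) by norm_num, Real.rpow_natCast]
    norm_num
  have hER : ((2:ℝ) ^ ((1:ℝ)/2) + 6) * ((L+2)*L) ≤ 2*((n:ℝ)+3) := by
    rw [hLm]
    have hq : (0:ℝ) ≤ (m + 8.33 + 2) * (m + 8.33) := by nlinarith
    have hkey : (7.41422:ℝ) * ((m + 8.33 + 2) * (m + 8.33)) ≤ 2*((n:ℝ)+3) := by
      nlinarith [hncube, hm, sq_nonneg m, mul_nonneg (mul_nonneg hm hm) hm]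
    nlinarith [mul_le_mul_of_nonneg_right hsqrt2 hq, hkey]
  -- Left endpoint inequality: (2^{5L/7} + 6) · (0.7L+1.4) ≤ 2(n+3)
  have hX595 : (61.5:ℝ) ≤ (2:ℝ) ^ (5.95:ℝ) := by
    apply le_two_rpow_of_pow_le (q := 20) (by norm_num) (by norm_num)
    rw [show (5.95 * ((20:ℕ):ℝ)) = ((119:ℕ):ℝ) by norm_num, Real.rpow_natCast]
    norm_num
  have hX : (61.5:ℝ) ≤ (2:ℝ) ^ (5*L/7) :=
    le_trans hX595 (Real.rpow_le_rpow_of_exponent_le (by norm_num) (by linarith))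
  have hY238 : (5.2:ℝ) ≤ (2:ℝ) ^ (2.38:ℝ) := by
    apply le_two_rpow_of_pow_le (q := 50) (by norm_num) (by norm_num)
    rw [show (2.38 * ((50:ℕ):ℝ)) = ((119:ℕ):ℝ) by norm_num, Real.rpow_natCast]
    norm_num
  have hYsplit : (2:ℝ) ^ (2*L/7) = (2:ℝ) ^ (2.38:ℝ) * (2:ℝ) ^ (2*m/7) := by
    rw [← Real.rpow_add (by norm_num)]
    congr 1
    rw [hLm]; ring
  have hYexp : (1 + 0.198*m) ≤ (2:ℝ) ^ (2*m/7) := by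
    rw [Real.rpow_def_of_pos (by norm_num)]
    have h1' := Real.add_one_le_exp (Real.log 2 * (2*m/7))
    have h2' : 0.6931 * m ≤ Real.log 2 * m := mul_le_mul_of_nonneg_right hlog2 hm
    nlinarith [h1', h2']
  have hY : 5.2*(1 + 0.198*m) ≤ (2:ℝ) ^ (2*L/7) := by
    rw [hYsplit]
    have h0 : (0:ℝ) ≤ 1 + 0.198*m := by linarith
    nlinarith [Real.rpow_pos_of_pos (show (0:ℝ) < 2 by norm_num) (2*m/7)]
  have hnXY : (n:ℝ) = (2:ℝ) ^ (5*L/7) * (2:ℝ) ^ (2*L/7) := by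
    rw [hnL, ← Real.rpow_add (by norm_num)]
    congr 1; ring
  have hEL : ((2:ℝ) ^ (5*L/7) + 6) * (0.7*L + 1.4) ≤ 2*((n:ℝ)+3) := by
    rw [hnXY]
    rw [hLm]
    have hXpos : (0:ℝ) < (2:ℝ) ^ (5*L/7) := Real.rpow_pos_of_pos (by norm_num) _
    rw [hLm] at hXpos
    have hP1 : 0 ≤ (2:ℝ) ^ (5*(m+8.33)/7) * ((2:ℝ) ^ (2*(m+8.33)/7) - 5.2*(1 + 0.198*m)) := by
      apply mul_nonneg hXpos.le
      rw [← hLm]; linarith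
    have hP2 : 0 ≤ m * ((2:ℝ) ^ (5*(m+8.33)/7) - 61.5) := by
      apply mul_nonneg hm
      rw [← hLm]; linarith
    rw [hLm] at hX
    nlinarith [hP1, hP2, hX, hm]
  -- setup of convex-combination argument
  have hlR8 : (8:ℝ) ≤ (ℓ:ℝ) := by exact_mod_cast hl
  have hlRpos : (0:ℝ) < (ℓ:ℝ) := by linarith
  have hl0pos : (0:ℝ) < 0.7*L + 1.4 := by linarith
  have hl1pos : (0:ℝ) < (L+2)*L := by nlinarith
  have hl01 : 0.7*L + 1.4 < (L+2)*L := lt_of_lt_of_le hcon h1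
  set v0 := 1/(0.7*L + 1.4) with hv0def
  set v1 := 1/((L+2)*L) with hv1def
  set vR := 1/(ℓ:ℝ) with hvRdef
  have hv1R : v1 ≤ vR := one_div_le_one_div_of_le hlRpos h1
  have hvR0 : vR ≤ v0 := one_div_le_one_div_of_le hl0pos (le_of_lt hcon)
  have hv10 : v1 < v0 := one_div_lt_one_div_of_lt hl0pos hl01
  have hD : (0:ℝ) < v0 - v1 := sub_pos.2 hv10
  clear_value v0 v1 vR
  set a := (v0 - vR)/(v0 - v1) with hadef
  set b := (vR - v1)/(v0 - v1) with hbdef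
  have ha : 0 ≤ a := div_nonneg (by linarith) hD.le
  have hb : 0 ≤ b := div_nonneg (by linarith) hD.le
  clear_value a b
  have hab : a + b = 1 := by
    rw [hadef, hbdef, ← add_div]
    rw [show v0 - vR + (vR - v1) = v0 - v1 by ring, div_self hD.ne']
  have hvcomb : a*v1 + b*v0 = vR := by
    rw [hadef, hbdef]
    field_simp [hD.ne']
    ring
  set B := L*((1/2)*L + 1) with hBdef
  clear_value B
  have hLne : L ≠ 0 := by intro h; rw [h] at hL833; norm_num at hL833
  have hL2ne : L + 2 ≠ 0 := by intro h; nlinarith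
  have hBv1 : B * v1 = 1/2 := by
    rw [hBdef, hv1def]
    field_simp
  have hBv0 : B * v0 = 5*L/7 := by
    rw [hBdef, hv0def, mul_one_div, div_eq_div_iff hl0pos.ne' (by norm_num : (7:ℝ) ≠ 0)]
    ring
  have hBvR : B * vR = a*(1/2) + b*(5*L/7) := by
    rw [← hBv1, ← hBv0, ← hvcomb]; ring
  -- endpoint bounds in `v` form
  have hERv : (2:ℝ) ^ ((1:ℝ)/2) ≤ 2*((n:ℝ)+3)*v1 - 6 := by
    rw [hv1def, mul_one_div, le_sub_iff_add_le, le_div_iff₀ hl1pos]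
    linarith [hER]
  have hELv : (2:ℝ) ^ (5*L/7) ≤ 2*((n:ℝ)+3)*v0 - 6 := by
    rw [hv0def, mul_one_div, le_sub_iff_add_le, le_div_iff₀ hl0pos]
    linarith [hEL]
  -- convexity of exp gives the bound at vR
  have hcvx : Real.exp (Real.log 2 * (B*vR)) ≤
      a * Real.exp (Real.log 2 * ((1:ℝ)/2)) + b * Real.exp (Real.log 2 * (5*L/7)) := by
    have h := convexOn_exp.2 (Set.mem_univ (Real.log 2 * ((1:ℝ)/2)))
      (Set.mem_univ (Real.log 2 * (5*L/7))) ha hb hab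
    simp only [smul_eq_mul] at h
    have harg : Real.log 2 * (B*vR) =
        a * (Real.log 2 * ((1:ℝ)/2)) + b * (Real.log 2 * (5*L/7)) := by
      rw [hBvR]; ring
    rw [harg]; exact h
  have hcomb : (2:ℝ) ^ (B*vR) ≤ 2*((n:ℝ)+3)*vR - 6 := by
    rw [Real.rpow_def_of_pos (by norm_num : (0:ℝ) < 2)]
    calc Real.exp (Real.log 2 * (B*vR))
        ≤ a * Real.exp (Real.log 2 * ((1:ℝ)/2)) + b * Real.exp (Real.log 2 * (5*L/7)) := hcvx
      _ = a * (2:ℝ) ^ ((1:ℝ)/2) + b * (2:ℝ) ^ (5*L/7) := by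
          rw [Real.rpow_def_of_pos (by norm_num : (0:ℝ) < 2),
            Real.rpow_def_of_pos (by norm_num : (0:ℝ) < 2)]
      _ ≤ a * (2*((n:ℝ)+3)*v1 - 6) + b * (2*((n:ℝ)+3)*v0 - 6) :=
          add_le_add (mul_le_mul_of_nonneg_left hERv ha) (mul_le_mul_of_nonneg_left hELv hb)
      _ = 2*((n:ℝ)+3)*vR - 6 := by linear_combination 2*((n:ℝ)+3)*hvcomb - 6*hab
  -- conclude
  have hb0 : (0:ℝ) ≤ (2:ℝ) ^ (B*vR) := Real.rpow_nonneg (by norm_num) _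
  have hc : (2:ℝ) ^ (B*vR) ≤ 2*((n:ℝ)+3)/(ℓ:ℝ) - 6 := by
    have : 2*((n:ℝ)+3)/(ℓ:ℝ) = 2*((n:ℝ)+3)*vR := by rw [hvRdef, mul_one_div]
    rw [this]; exact hcomb
  have hBvl : B * vR * (ℓ:ℝ) = B := by
    rw [hvRdef, mul_assoc, one_div_mul_cancel (ne_of_gt hlRpos), mul_one]
  have hpow : (2:ℝ) ^ B ≤ (2*((n:ℝ)+3)/(ℓ:ℝ) - 6) ^ ((ℓ:ℕ):ℝ) := by
    rw [← hBvl, Real.rpow_mul (by norm_num : (0:ℝ) ≤ 2)]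
    exact Real.rpow_le_rpow hb0 hc (Nat.cast_nonneg ℓ)
  have hnE : (n:ℝ) ^ ((1/2)*L + 1) = (2:ℝ) ^ B := by
    rw [hnL, ← Real.rpow_mul (by norm_num : (0:ℝ) ≤ 2), hBdef]
  rw [hnE] at h2
  linarith [hpow, h2]
end

section
/- Let q ≥ 2, m ≥ 4 and ℓ ≥ 12 be integers, set n = (q^m − 1)/(q − 1), and assume that n ≥ 324 and ℓ ≤ 0.7·log₂ n + 1.4. Put k = ⌈log_q(2ℓ − 1)⌉ + 1. Then (n + 3 − 3ℓ)^ℓ / ℓ! > q^{mk}. -/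
open Real

private lemma aux1' (l : ℕ) (hl : 12 ≤ l) : (8*l^3+3*l)^7 ≤ 2^(10*l-14) := by
  induction l, hl using Nat.le_induction with
  | base => norm_num
  | succ l hl ih =>
    have h2 : 8*(l+1)^3+3*(l+1) ≤ 2*(8*l^3+3*l) := by nlinarith [sq_nonneg l, hl]
    calc (8*(l+1)^3+3*(l+1))^7 ≤ (2*(8*l^3+3*l))^7 := Nat.pow_le_pow_left h2 7
      _ = 2^7 * (8*l^3+3*l)^7 := by rw [mul_pow]
      _ ≤ 2^7 * 2^(10*l-14) := Nat.mul_le_mul_left _ ih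
      _ = 2^(7 + (10*l-14)) := by rw [pow_add]
      _ ≤ 2^(10*(l+1)-14) := Nat.pow_le_pow_right (by norm_num) (by omega)

private lemma aux2' (l : ℕ) (hl : 12 ≤ l) : 4096*l^4 < 2^(3*l) := by
  induction l, hl using Nat.le_induction with
  | base => norm_num
  | succ l hl ih =>
    have h2 : (l+1)^4 ≤ 2*l^4 := by
      have h1 : 12*l^3 ≤ l*l^3 := Nat.mul_le_mul_right _ hl
      have h2 : 12*l^2 ≤ l*l^2 := Nat.mul_le_mul_right _ hl
      have h3 : 12*l ≤ l*l := Nat.mul_le_mul_right _ hl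
      nlinarith [h1, h2, h3]
    calc 4096*(l+1)^4 ≤ 4096*(2*l^4) := Nat.mul_le_mul_left _ h2
      _ = 2*(4096*l^4) := by ring
      _ < 2*2^(3*l) := by omega
      _ ≤ 2^(3*(l+1)) := by
          rw [show 3*(l+1) = 3*l+3 by ring, pow_add]
          nlinarith [Nat.pow_pos (n := 3*l) (show 0 < 2 by norm_num)]

private lemma aux3' (j : ℕ) (hj : 6 ≤ j) : 4*j+2 ≤ 2^(j-1) := by
  induction j, hj using Nat.le_induction with
  | base => norm_num
  | succ j hj ih =>
    have : 2^((j+1)-1) = 2*2^(j-1) := by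
      rw [show (j+1)-1 = (j-1)+1 by omega, pow_succ]; ring
    omega

/-- Let `q ≥ 2`, `m ≥ 4` and `ℓ ≥ 12`, set `n = (q^m − 1)/(q − 1)`, and assume `n ≥ 324`
and `ℓ ≤ 0.7·log₂ n + 1.4`.  Put `k = ⌈log_q(2ℓ − 1)⌉ + 1`.  Then
`(n + 3 − 3ℓ)^ℓ / ℓ! > q^{mk}`. -/
theorem stmt_13 (q m ℓ n : ℕ) (hq : 2 ≤ q) (hm : 4 ≤ m) (hl : 12 ≤ ℓ)
    (hn : n = (q ^ m - 1) / (q - 1)) (hn2 : 324 ≤ n)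
    (hln : (ℓ : ℝ) ≤ 0.7 * Real.logb 2 n + 1.4) :
    ((n : ℝ) + 3 - 3 * ℓ) ^ ℓ / (Nat.factorial ℓ : ℝ) >
      (q : ℝ) ^ ((m : ℝ) * ((⌈Real.logb q (2 * (ℓ : ℝ) - 1)⌉ : ℝ) + 1)) := by
  set t : ℕ := 2*ℓ - 1 with ht
  have htc : ((t : ℕ) : ℝ) = 2*(ℓ:ℝ) - 1 := by
    rw [ht, Nat.cast_sub (by omega : 1 ≤ 2*ℓ)]; push_cast; ring
  have hceil : ⌈Real.logb q (2*(ℓ:ℝ)-1)⌉ = (Nat.clog q t : ℤ) := by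
    rw [← htc, Real.ceil_logb_natCast (Nat.cast_nonneg t), Int.clog_natCast]
  set k : ℕ := Nat.clog q t + 1 with hk
  have hrhs : (q : ℝ) ^ ((m : ℝ) * ((⌈Real.logb q (2 * (ℓ : ℝ) - 1)⌉ : ℝ) + 1))
      = ((q ^ (m*k) : ℕ) : ℝ) := by
    rw [hceil]
    rw [show (m:ℝ) * (((Nat.clog q t : ℤ) : ℝ) + 1) = (((m*k : ℕ) : ℕ) : ℝ) by
      push_cast [hk]; ring]
    rw [Real.rpow_natCast]
    push_cast
    ring
  -- q^(m-1) ≤ n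
  have hdvd : q - 1 ∣ q ^ m - 1 := by simpa using Nat.sub_dvd_pow_sub_pow q 1 m
  have hmuln : n * (q - 1) = q ^ m - 1 := by rw [hn]; exact Nat.div_mul_cancel hdvd
  have hpow1 : 1 ≤ q ^ (m-1) := Nat.one_le_pow _ _ (by omega)
  have hqe : q ^ (m-1) * q = q ^ m := by rw [← pow_succ]; congr 1; omega
  have hple : q ^ (m-1) ≤ q ^ m := Nat.pow_le_pow_right (by omega) (by omega)
  have hkey : q ^ (m-1) * (q-1) ≤ n * (q-1) := by
    rw [hmuln]
    calc q^(m-1)*(q-1) = q^(m-1)*q - q^(m-1)*1 := by rw [Nat.mul_sub]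
      _ = q^m - q^(m-1) := by rw [hqe, mul_one]
      _ ≤ q^m - 1 := by omega
  have hqmn : q ^ (m-1) ≤ n := Nat.le_of_mul_le_mul_right hkey (by omega : 0 < q - 1)
  -- from hln : 2^(10ℓ-14) ≤ n^7
  have hnpos : 0 < n := by omega
  have hLlog : ((10*(ℓ:ℝ))-14)/7 ≤ Real.logb 2 n := by
    norm_num at hln ⊢; linarith
  have hF1r : ((2:ℝ) ^ (((10*(ℓ:ℝ))-14)/7)) ≤ (n:ℝ) := by
    have h := Real.rpow_le_rpow_of_exponent_le (by norm_num : (1:ℝ) ≤ 2) hLlog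
    rwa [Real.rpow_logb (by positivity) (by norm_num)
      (by exact_mod_cast hnpos : (0:ℝ) < n)] at h
  have hF1 : 2 ^ (10*ℓ - 14) ≤ n ^ 7 := by
    have h7 : ((2:ℝ) ^ (((10*(ℓ:ℝ))-14)/7)) ^ (7:ℕ) ≤ (n:ℝ) ^ (7:ℕ) :=
      pow_le_pow_left₀ (by positivity) hF1r 7
    have he : ((2:ℝ) ^ (((10*(ℓ:ℝ))-14)/7)) ^ (7:ℕ) = (((2:ℕ) ^ (10*ℓ-14) : ℕ) : ℝ) := by
      rw [← Real.rpow_natCast ((2:ℝ) ^ (((10*(ℓ:ℝ))-14)/7)) 7,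
        ← Real.rpow_mul (by norm_num : (0:ℝ) ≤ 2)]
      rw [show ((10*(ℓ:ℝ))-14)/7 * ((7:ℕ):ℝ) = (((10*ℓ-14 : ℕ) : ℕ) : ℝ) by
        rw [Nat.cast_sub (by omega : 14 ≤ 10*ℓ)]; push_cast; ring]
      rw [Real.rpow_natCast]
      push_cast
      ring
    rw [he] at h7
    exact_mod_cast h7
  have hn8 : 8*ℓ^3 + 3*ℓ ≤ n := by
    have h7 : (8*ℓ^3+3*ℓ)^7 ≤ n^7 := le_trans (aux1' ℓ hl) hF1
    exact le_of_pow_le_pow_left₀ (by norm_num) (Nat.zero_le n) h7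
  have hl3 : ℓ ≤ ℓ^3 := Nat.le_self_pow (by norm_num) ℓ
  set N : ℕ := n + 3 - 3*ℓ with hNdef
  have hN8 : 8*ℓ^3 ≤ N := by omega
  have hn2N : n ≤ 2*N := by omega
  have hNpos : 0 < N := by omega
  set c : ℕ := Nat.clog 2 t + 1 with hc
  have hkc : k ≤ c := by
    have := Nat.clog_anti_left (show 1 < 2 by norm_num) hq (n := t)
    omega
  have h2c : 2^c ≤ 8*ℓ := by
    have hpos : 0 < Nat.clog 2 t := Nat.clog_pos (by norm_num) (by omega)
    have hlt : 2 ^ (Nat.clog 2 t - 1) < t := Nat.pow_pred_clog_lt_self (by norm_num) (by omega)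
    have he : 2^c = 4 * 2^(Nat.clog 2 t - 1) := by
      rw [show c = (Nat.clog 2 t - 1) + 2 by omega, pow_add]; ring
    omega
  have h2cl : 2*c ≤ ℓ := by
    have hj : 4*(ℓ/2)+2 ≤ 2^(ℓ/2-1) := aux3' (ℓ/2) (by omega)
    have hcl : Nat.clog 2 t ≤ ℓ/2 - 1 :=
      (Nat.clog_le_iff_le_pow (by norm_num)).mpr (by omega)
    omega
  -- the main natural-number inequality
  have hA : 2^(4*c) < 2^(3*ℓ) := by
    calc 2^(4*c) = (2^c)^4 := by rw [← pow_mul, Nat.mul_comm]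
      _ ≤ (8*ℓ)^4 := Nat.pow_le_pow_left h2c 4
      _ = 4096*ℓ^4 := by ring
      _ < 2^(3*ℓ) := aux2' ℓ hl
  have hB : 2^(3*ℓ) * ℓ^(3*ℓ) ≤ N^ℓ := by
    calc 2^(3*ℓ) * ℓ^(3*ℓ) = (8*ℓ^3)^ℓ := by
          rw [mul_pow, ← pow_mul, show (2:ℕ)^(3*ℓ) = 8^ℓ by
            rw [show (8:ℕ) = 2^3 by norm_num, ← pow_mul]]
      _ ≤ N^ℓ := Nat.pow_le_pow_left hN8 ℓ
  have hmain : Nat.factorial ℓ * q ^ (m*k) < N ^ ℓ := by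
    have hcube : (Nat.factorial ℓ * q ^ (m*k))^3 < (N^ℓ)^3 := by
      calc (Nat.factorial ℓ * q^(m*k))^3 = (Nat.factorial ℓ)^3 * q^(m*k*3) := by
            rw [mul_pow, ← pow_mul]
        _ ≤ ℓ^(3*ℓ) * n^(4*c) := by
            apply Nat.mul_le_mul
            · calc (Nat.factorial ℓ)^3 ≤ (ℓ^ℓ)^3 :=
                    Nat.pow_le_pow_left (Nat.factorial_le_pow ℓ) 3
                _ = ℓ^(3*ℓ) := by rw [← pow_mul, Nat.mul_comm]
            · calc q^(m*k*3) ≤ q^((m-1)*(4*c)) := by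
                    apply Nat.pow_le_pow_right (by omega)
                    calc m*k*3 ≤ m*c*3 := by
                          exact Nat.mul_le_mul_right 3 (Nat.mul_le_mul_left m hkc)
                      _ = (3*m)*c := by ring
                      _ ≤ (4*(m-1))*c := Nat.mul_le_mul_right c (by omega)
                      _ = (m-1)*(4*c) := by ring
                _ = (q^(m-1))^(4*c) := by rw [← pow_mul]
                _ ≤ n^(4*c) := Nat.pow_le_pow_left hqmn _
        _ ≤ ℓ^(3*ℓ) * (2*N)^(4*c) := Nat.mul_le_mul_left _ (Nat.pow_le_pow_left hn2N _)
        _ = 2^(4*c) * ℓ^(3*ℓ) * N^(4*c) := by rw [mul_pow]; ring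
        _ < 2^(3*ℓ) * ℓ^(3*ℓ) * N^(4*c) := by
            have hp1 : 0 < ℓ^(3*ℓ) := Nat.pow_pos (by omega)
            have hp2 : 0 < N^(4*c) := Nat.pow_pos hNpos
            exact Nat.mul_lt_mul_of_lt_of_le
              (Nat.mul_lt_mul_of_lt_of_le hA (le_refl _) hp1) (le_refl _) hp2
        _ ≤ N^ℓ * N^(4*c) := Nat.mul_le_mul_right _ hB
        _ ≤ N^(3*ℓ-4*c) * N^(4*c) :=
            Nat.mul_le_mul_right _ (Nat.pow_le_pow_right hNpos (by omega))
        _ = N^(3*ℓ) := by rw [← pow_add]; congr 1; omega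
        _ = (N^ℓ)^3 := by rw [← pow_mul, Nat.mul_comm]
    exact (Nat.pow_lt_pow_iff_left (by norm_num : (3:ℕ) ≠ 0)).mp hcube
  -- back to the reals
  have hNc : ((n:ℝ)+3-3*ℓ) = (N:ℝ) := by
    rw [hNdef, Nat.cast_sub (by omega : 3*ℓ ≤ n+3)]; push_cast; ring
  rw [hrhs, hNc, gt_iff_lt, lt_div_iff₀ (by exact_mod_cast Nat.factorial_pos ℓ)]
  have h := hmain
  rw [Nat.mul_comm] at h
  exact_mod_cast h
end

section
/- Let m and ℓ be integers and ε ∈ {1, −1}; set n = 2^{m−1}(2^m + ε) and assume n ≥ 8128, ℓ ≥ 14 and ℓ < √n/16. Put k = ⌈log₂ ℓ⌉ + 1. Then (2(n+3)/ℓ − 6)^ℓ > 2^{(4m−k)(k+1)/2}. -/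
open Real

lemma aux_nat_pow (d : ℕ) : (13 + 2 * d : ℝ) ≤ 2 ^ (d + 4) := by
  have h : (d : ℝ) + 1 ≤ 2 ^ d := by
    exact_mod_cast (Nat.lt_two_pow_self : d < 2 ^ d)
  have h2 : (2 : ℝ) ^ (d + 4) = 2 ^ d * 16 := by ring
  nlinarith [h]

lemma aux_int_rpow (c : ℤ) (hc : 5 ≤ c) : 2 * (c : ℝ) + 3 ≤ (2 : ℝ) ^ ((c : ℝ) - 1) := by
  obtain ⟨d, rfl⟩ : ∃ d : ℕ, c = (d : ℤ) + 5 := ⟨(c - 5).toNat, by omega⟩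
  have h1 : (((d : ℤ) + 5 : ℤ) : ℝ) - 1 = ((d + 4 : ℕ) : ℝ) := by push_cast; ring
  rw [h1, Real.rpow_natCast]
  have := aux_nat_pow d
  have h2 : (((d : ℤ) + 5 : ℤ) : ℝ) = (d : ℝ) + 5 := by push_cast; ring
  rw [h2]
  linarith

/-- Let `m`, `ℓ` be integers and `ε ∈ {1, −1}`; set `n = 2^{m−1}(2^m + ε)` and assume
`n ≥ 8128`, `ℓ ≥ 14` and `ℓ < √n/16`.  Put `k = ⌈log₂ ℓ⌉ + 1`.  Then
`(2(n+3)/ℓ − 6)^ℓ > 2^{(4m−k)(k+1)/2}`. -/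
theorem stmt_14 (m ℓ : ℕ) (ε : ℤ) (hε : ε = 1 ∨ ε = -1) (n : ℕ)
    (hn : (n : ℤ) = 2 ^ (m - 1) * (2 ^ m + ε))
    (hn2 : 8128 ≤ n) (hl : 14 ≤ ℓ) (hl2 : (ℓ : ℝ) < Real.sqrt n / 16) :
    (2 * ((n : ℝ) + 3) / ℓ - 6) ^ ℓ >
      (2 : ℝ) ^ ((4 * (m : ℝ) - ((⌈Real.logb 2 (ℓ : ℝ)⌉ : ℝ) + 1)) *
        (((⌈Real.logb 2 (ℓ : ℝ)⌉ : ℝ) + 1) + 1) / 2) := by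
  set c : ℤ := ⌈Real.logb 2 (ℓ : ℝ)⌉ with hcdef
  have hl0 : (0 : ℝ) < (ℓ : ℝ) := by
    have : (14 : ℝ) ≤ (ℓ : ℝ) := by exact_mod_cast hl
    linarith
  -- m ≥ 7
  have hm7 : 7 ≤ m := by
    by_contra h
    push_neg at h
    interval_cases m <;> rcases hε with rfl | rfl <;> omega
  -- integer bounds on n
  have hpm : (2 : ℤ) ^ m = 2 ^ (m - 1) * 2 := by
    rw [← pow_succ]
    congr 1
    omega
  have hp1 : (1 : ℤ) ≤ 2 ^ (m - 1) := one_le_pow₀ one_le_two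
  have hεb : -1 ≤ ε ∧ ε ≤ 1 := by rcases hε with rfl | rfl <;> norm_num
  have hpadd : (2 : ℤ) ^ (m - 1) * 2 ^ (m - 1) = 2 ^ (2 * m - 2) := by
    rw [← pow_add]
    congr 1
    omega
  have hnlow : (2 : ℤ) ^ (2 * m - 2) ≤ (n : ℤ) := by
    rw [← hpadd, hn]
    have h2 : (2 : ℤ) ^ (m - 1) ≤ 2 ^ m + ε := by
      rw [hpm]; linarith [hεb.1]
    have := mul_le_mul_of_nonneg_left h2 (by linarith : (0 : ℤ) ≤ 2 ^ (m - 1))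
    linarith
  have hnhigh : (n : ℤ) < 2 ^ (2 * m) := by
    have hpadd2 : (2 : ℤ) ^ (m - 1) * (2 ^ (m - 1) * 4) = 2 ^ (2 * m) := by
      have : (2 : ℤ) ^ (m - 1) * (2 ^ (m - 1) * 4) = 2 ^ ((m - 1) + ((m - 1) + 2)) := by
        rw [pow_add, pow_add]; ring
      rw [this]; congr 1; omega
    rw [hn, ← hpadd2]
    have h2 : 2 ^ m + ε < 2 ^ (m - 1) * 4 := by
      rw [hpm]; nlinarith [hεb.2, hp1]
    nlinarith [hp1]
  -- real bounds on sqrt n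
  have hn0 : (0 : ℝ) ≤ (n : ℝ) := by positivity
  have hs2 : Real.sqrt n * Real.sqrt n = (n : ℝ) := Real.mul_self_sqrt hn0
  have hsqlo : (2 : ℝ) ^ (m - 1) ≤ Real.sqrt n := by
    rw [show ((2 : ℝ) ^ (m - 1)) = Real.sqrt ((2 ^ (m - 1)) ^ 2) from
      (Real.sqrt_sq (by positivity)).symm]
    apply Real.sqrt_le_sqrt
    have : ((2 : ℝ) ^ (m - 1)) ^ 2 = (2 : ℝ) ^ (2 * m - 2) := by
      rw [← pow_mul]; congr 1; omega
    rw [this]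
    exact_mod_cast hnlow
  have hsqhi : Real.sqrt n < (2 : ℝ) ^ m := by
    have h1 : (n : ℝ) < ((2 : ℝ) ^ m) ^ 2 := by
      have : ((2 : ℝ) ^ m) ^ 2 = (2 : ℝ) ^ (2 * m) := by rw [← pow_mul]; ring_nf
      rw [this]
      exact_mod_cast hnhigh
    calc Real.sqrt n < Real.sqrt (((2 : ℝ) ^ m) ^ 2) := by
          apply Real.sqrt_lt_sqrt hn0 h1
      _ = (2 : ℝ) ^ m := Real.sqrt_sq (by positivity)
  -- c ≤ m - 4
  have hcm : c ≤ (m : ℤ) - 4 := by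
    rw [hcdef]
    apply Int.ceil_le.mpr
    have hlt : (ℓ : ℝ) < (2 : ℝ) ^ m / 16 := by
      calc (ℓ : ℝ) < Real.sqrt n / 16 := hl2
        _ < (2 : ℝ) ^ m / 16 := by linarith
    have h1 : Real.logb 2 (ℓ : ℝ) ≤ Real.logb 2 ((2 : ℝ) ^ m / 16) :=
      Real.logb_le_logb_of_le (by norm_num) hl0 (le_of_lt hlt)
    have h2 : Real.logb 2 ((2 : ℝ) ^ m / 16) = (m : ℝ) - 4 := by
      rw [show (16 : ℝ) = 2 ^ (4 : ℕ) by norm_num, Real.logb_div (by positivity) (by positivity),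
        Real.logb_pow, Real.logb_pow, Real.logb_self_eq_one (by norm_num)]
      ring
    rw [h2] at h1
    push_cast
    linarith
  -- c ≥ 4
  have hc4 : 4 ≤ c := by
    have h8 : Real.logb 2 (8 : ℝ) = 3 := by
      rw [show (8 : ℝ) = 2 ^ (3 : ℕ) by norm_num, Real.logb_pow,
        Real.logb_self_eq_one (by norm_num)]
      norm_num
    have h1 : Real.logb 2 (8 : ℝ) < Real.logb 2 (ℓ : ℝ) := by
      apply Real.logb_lt_logb (by norm_num) (by norm_num)
      have : (14 : ℝ) ≤ (ℓ : ℝ) := by exact_mod_cast hl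
      linarith
    have h2 : (3 : ℝ) < (c : ℝ) := by
      rw [h8] at h1
      calc (3 : ℝ) < Real.logb 2 (ℓ : ℝ) := h1
        _ ≤ (c : ℝ) := Int.le_ceil _
    exact_mod_cast Int.add_one_le_of_lt (by exact_mod_cast h2 : (3 : ℤ) < c)
  -- ℓ ≥ 2(c+2)
  have hl2c : 2 * ((c : ℝ) + 2) ≤ (ℓ : ℝ) := by
    rcases lt_or_ge c 5 with h5 | h5
    · have : c = 4 := by omega
      rw [this]
      have : (14 : ℝ) ≤ (ℓ : ℝ) := by exact_mod_cast hl
      norm_num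
      linarith
    · have hcl : (2 : ℝ) ^ ((c : ℝ) - 1) < (ℓ : ℝ) := by
        have h1 : (c : ℝ) - 1 < Real.logb 2 (ℓ : ℝ) := by
          have := Int.ceil_lt_add_one (Real.logb 2 (ℓ : ℝ))
          rw [← hcdef] at this
          linarith
        have h2 : (2 : ℝ) ^ ((c : ℝ) - 1) < (2 : ℝ) ^ (Real.logb 2 (ℓ : ℝ)) :=
          Real.rpow_lt_rpow_left_iff (by norm_num : (1 : ℝ) < 2) |>.mpr h1
        rwa [Real.rpow_logb (by norm_num) (by norm_num) hl0] at h2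
      have h3 : 2 * (c : ℝ) + 3 < (ℓ : ℝ) := lt_of_le_of_lt (aux_int_rpow c h5) hcl
      have h4 : (2 * c + 3 : ℤ) < (ℓ : ℤ) := by exact_mod_cast h3
      have h5' : (2 * c + 4 : ℤ) ≤ (ℓ : ℤ) := by omega
      have : ((2 * c + 4 : ℤ) : ℝ) ≤ ((ℓ : ℤ) : ℝ) := by exact_mod_cast h5'
      push_cast at this
      linarith
  -- base bound: 2^(m+3) + 6 < 2(n+3)/ℓ
  have hpoweq : (2 : ℝ) ^ (m + 3) = 2 ^ (m - 1) * 16 := by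
    rw [show (16 : ℝ) = 2 ^ (4 : ℕ) by norm_num, ← pow_add]
    congr 1
    omega
  have hs1 : (1 : ℝ) ≤ Real.sqrt n := by
    have : (1 : ℝ) ≤ (2 : ℝ) ^ (m - 1) := one_le_pow₀ one_le_two
    linarith
  have hbase : (2 : ℝ) ^ (m + 3) + 6 < 2 * ((n : ℝ) + 3) / ℓ := by
    rw [lt_div_iff₀ hl0]
    set s := Real.sqrt n with hs
    have key : ((2 : ℝ) ^ (m - 1) * 16 + 6) * (ℓ : ℝ) < (2 ^ (m - 1) * 16 + 6) * (s / 16) := by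
      apply mul_lt_mul_of_pos_left hl2 (by positivity)
    have key2 : (2 : ℝ) ^ (m - 1) * s ≤ s * s :=
      mul_le_mul_of_nonneg_right hsqlo (by positivity)
    have key3 : s ≤ s * s := le_mul_of_one_le_left (by positivity) hs1
    rw [hpoweq]
    nlinarith [key, key2, key3, hs2]
  have hB : (2 : ℝ) ^ (m + 3) < 2 * ((n : ℝ) + 3) / ℓ - 6 := by linarith
  -- LHS > 2^((m+3)*ℓ)
  have hlne : ℓ ≠ 0 := by omega
  have hLHS : (2 : ℝ) ^ ((m + 3) * ℓ) < (2 * ((n : ℝ) + 3) / ℓ - 6) ^ ℓ := by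
    calc (2 : ℝ) ^ ((m + 3) * ℓ) = ((2 : ℝ) ^ (m + 3)) ^ ℓ := by rw [pow_mul]
      _ < (2 * ((n : ℝ) + 3) / ℓ - 6) ^ ℓ := by
          apply pow_lt_pow_left₀ hB (by positivity) hlne
  -- exponent comparison
  have hexp : (4 * (m : ℝ) - ((c : ℝ) + 1)) * (((c : ℝ) + 1) + 1) / 2 ≤ (((m + 3) * ℓ : ℕ) : ℝ) := by
    have hm' : (7 : ℝ) ≤ (m : ℝ) := by exact_mod_cast hm7
    have hc4' : (4 : ℝ) ≤ (c : ℝ) := by exact_mod_cast hc4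
    have hcm' : (c : ℝ) ≤ (m : ℝ) - 4 := by
      have : ((c : ℤ) : ℝ) ≤ (((m : ℤ) - 4 : ℤ) : ℝ) := by exact_mod_cast hcm
      push_cast at this
      linarith
    push_cast
    nlinarith [mul_nonneg (by linarith : (0 : ℝ) ≤ (m : ℝ) + 3)
        (by linarith : (0 : ℝ) ≤ (ℓ : ℝ) - 2 * ((c : ℝ) + 2)),
      mul_nonneg (by linarith : (0 : ℝ) ≤ (c : ℝ) + 2) (by linarith : (0 : ℝ) ≤ (c : ℝ) + 13)]
  have hRHS : (2 : ℝ) ^ ((4 * (m : ℝ) - ((c : ℝ) + 1)) * (((c : ℝ) + 1) + 1) / 2)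
      ≤ (2 : ℝ) ^ ((m + 3) * ℓ) := by
    calc (2 : ℝ) ^ ((4 * (m : ℝ) - ((c : ℝ) + 1)) * (((c : ℝ) + 1) + 1) / 2)
        ≤ (2 : ℝ) ^ ((((m + 3) * ℓ : ℕ) : ℝ)) :=
          Real.rpow_le_rpow_left_iff (by norm_num : (1 : ℝ) < 2) |>.mpr hexp
      _ = (2 : ℝ) ^ ((m + 3) * ℓ) := Real.rpow_natCast 2 _
  exact lt_of_le_of_lt hRHS hLHS
end
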